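/- For every n ∈ ℕ with n ≥ 3, the Euler numbers and Lucas numbers satisfy n·E_{n−1} − (L_n − 4·L_{n−1}) = Σ_{k=3}^{n} (k·E_{k−1} − 3(k−1)·E_{k−2})·L_{n−k+1} + 5·Σ_{k=3}^{n} Σ_{s=1}^{k−2} (−1)^{k−s}·2^{k−s−2}·s·E_{s−1}·L_{n−k+1}. -/

import Mathlib

set_option maxRecDepth 8000

noncomputable section

/-- `Eu x k` is the Euler polynomial `E_k(x)`, characterized by the generating function
`(2/(e^z+1)) e^{xz} = Σ_k E_k(x) z^k / k!` for `|z| < π`. -/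
def IsEulerFamily (Eu : ℝ → ℕ → ℝ) : Prop :=
  ∀ x z : ℝ, |z| < Real.pi →
    HasSum (fun k : ℕ => Eu x k * z ^ k / (Nat.factorial k : ℝ))
      (2 / (Real.exp z + 1) * Real.exp (x * z))

/-- The Lucas sequence: `L_1 = 1`, `L_2 = 3`, `L_{m+2} = L_{m+1} + L_m` (so `L_0 = 2`). -/
def lucasSeq : ℕ → ℕ
  | 0 => 2
  | 1 => 1
  | m + 2 => lucasSeq (m + 1) + lucasSeq m

namespace EulerLucasAux

open Finset

lemma lucas_add_two (m : ℕ) : lucasSeq (m + 2) = lucasSeq (m + 1) + lucasSeq m := rfl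

lemma lucas0 : lucasSeq 0 = 2 := rfl
lemma lucas1 : lucasSeq 1 = 1 := rfl
lemma lucas2 : lucasSeq 2 = 3 := by rw [show (2:ℕ) = 0 + 2 from rfl, lucas_add_two]; rfl
lemma lucas3 : lucasSeq 3 = 4 := by rw [show (3:ℕ) = 1 + 2 from rfl, lucas_add_two]; rfl
lemma lucas4 : lucasSeq 4 = 7 := by
  rw [show (4:ℕ) = 2 + 2 from rfl, lucas_add_two, show (2:ℕ)+1 = 3 from rfl, lucas3, lucas2]

/-- `Eu 0 0 = 1`. -/
lemma eu_zero (Eu : ℝ → ℕ → ℝ) (hEu : IsEulerFamily Eu) : Eu 0 0 = 1 := by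
  have h := hEu 0 0 (by simpa using Real.pi_pos)
  have h2 : HasSum (fun k : ℕ => Eu 0 k * (0 : ℝ) ^ k / (Nat.factorial k : ℝ)) (Eu 0 0) := by
    have := hasSum_single (f := fun k : ℕ => Eu 0 k * (0 : ℝ) ^ k / (Nat.factorial k : ℝ)) 0
      (fun b hb => by simp [zero_pow hb])
    simpa using this
  have heq := h.unique h2
  rw [← heq]
  norm_num [Real.exp_zero]

/-- `Eu 0 1 = -(1/2)`. -/
lemma eu_one (Eu : ℝ → ℕ → ℝ) (hEu : IsEulerFamily Eu) : Eu 0 1 = -(1/2) := by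
  let p : FormalMultilinearSeries ℝ ℝ ℝ :=
    FormalMultilinearSeries.ofScalars ℝ (fun k => Eu 0 k / (Nat.factorial k : ℝ))
  have hcoeff : ∀ n, p.coeff n = Eu 0 n / (Nat.factorial n : ℝ) := by
    intro n
    show FormalMultilinearSeries.ofScalars ℝ _ n (fun _ => (1:ℝ)) = _
    rw [FormalMultilinearSeries.ofScalars_apply_eq]
    rw [one_pow, smul_eq_mul, mul_one]
  have hps : HasFPowerSeriesAt (fun z => 2 / (Real.exp z + 1)) p 0 := by
    rw [hasFPowerSeriesAt_iff]
    filter_upwards [Metric.ball_mem_nhds (0:ℝ) Real.pi_pos] with z hz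
    have hz' : |z| < Real.pi := by
      simpa [Real.dist_eq] using hz
    have h := hEu 0 z hz'
    simp only [zero_mul, Real.exp_zero, mul_one] at h
    simp only [zero_add]
    convert h using 1
    · rfl
    funext n
    rw [hcoeff n]
    rw [smul_eq_mul]
    ring
  have hd : HasDerivAt (fun z => 2 / (Real.exp z + 1)) (-(1/2)) 0 := by
    have he : HasDerivAt (fun z => Real.exp z + 1) (Real.exp 0) 0 :=
      (Real.hasDerivAt_exp 0).add_const 1
    have hne : Real.exp 0 + 1 ≠ 0 := by positivity
    have := (hasDerivAt_const (0:ℝ) (2:ℝ)).div he hne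
    convert this using 1
    · rfl
    · rfl
    · rfl
    rw [Real.exp_zero]
    norm_num
  have h1 := hps.deriv
  have h2 := hd.deriv
  rw [h2] at h1
  have hone : (p 1 fun _ => (1:ℝ)) = Eu 0 1 := by
    have h3 := hcoeff 1
    rw [FormalMultilinearSeries.coeff] at h3
    have : (1 : Fin 1 → ℝ) = fun _ => (1:ℝ) := rfl
    rw [this] at h3
    rw [h3]
    norm_num
  rw [hone] at h1
  exact h1.symm

variable (Eu : ℝ → ℕ → ℝ)

/-- the combined coefficient. -/
def Aa (k : ℕ) : ℝ :=
  ((k : ℝ) * Eu 0 (k - 1) - 3 * ((k : ℝ) - 1) * Eu 0 (k - 2))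
  + 5 * ∑ s ∈ Finset.Icc 1 (k - 2),
      (-1 : ℝ) ^ (k - s) * 2 ^ (k - s - 2) * (s : ℝ) * Eu 0 (s - 1)

/-- Key telescoping identity. -/
lemma key (m : ℕ) :
    Aa Eu (m + 5) + 2 * Aa Eu (m + 4)
      = ((m : ℝ) + 5) * Eu 0 (m + 4) - ((m : ℝ) + 4) * Eu 0 (m + 3)
        - ((m : ℝ) + 3) * Eu 0 (m + 2) := by
  have hterm : (-1 : ℝ) ^ (m + 5 - (m + 2 + 1)) * 2 ^ (m + 5 - (m + 2 + 1) - 2)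
        * ((m + 2 + 1 : ℕ) : ℝ) * Eu 0 (m + 2 + 1 - 1) = ((m : ℝ) + 3) * Eu 0 (m + 2) := by
    have e2 : m + 5 - (m + 2 + 1) - 2 = 0 := by omega
    have e1 : m + 5 - (m + 2 + 1) = 2 := by omega
    have e3 : m + 2 + 1 - 1 = m + 2 := by omega
    rw [e2, e1, e3]
    push_cast
    ring
  have hS : (∑ s ∈ Finset.Icc 1 (m + 3),
        (-1 : ℝ) ^ (m + 5 - s) * 2 ^ (m + 5 - s - 2) * (s : ℝ) * Eu 0 (s - 1))
      + 2 * (∑ s ∈ Finset.Icc 1 (m + 2),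
        (-1 : ℝ) ^ (m + 4 - s) * 2 ^ (m + 4 - s - 2) * (s : ℝ) * Eu 0 (s - 1))
      = ((m : ℝ) + 3) * Eu 0 (m + 2) := by
    rw [show m + 3 = (m + 2) + 1 from rfl,
      Finset.sum_Icc_succ_top (by omega : 1 ≤ m + 2 + 1), hterm]
    have hz : ∑ s ∈ Finset.Icc 1 (m + 2),
        ((-1 : ℝ) ^ (m + 5 - s) * 2 ^ (m + 5 - s - 2) * (s : ℝ) * Eu 0 (s - 1)
          + 2 * ((-1 : ℝ) ^ (m + 4 - s) * 2 ^ (m + 4 - s - 2) * (s : ℝ) * Eu 0 (s - 1))) = 0 := by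
      apply Finset.sum_eq_zero
      intro s hs
      rw [Finset.mem_Icc] at hs
      obtain ⟨j, hj⟩ : ∃ j, s + j = m + 2 := ⟨m + 2 - s, by omega⟩
      have f2 : m + 5 - s - 2 = j + 1 := by omega
      have f1 : m + 5 - s = j + 3 := by omega
      have f4 : m + 4 - s - 2 = j := by omega
      have f3 : m + 4 - s = j + 2 := by omega
      rw [f2, f1, f4, f3]
      ring
    rw [Finset.sum_add_distrib, ← Finset.mul_sum] at hz
    linarith [hz]
  simp only [Aa]
  have g1 : m + 5 - 2 = m + 3 := by omega
  have g2 : m + 4 - 2 = m + 2 := by omega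
  have g3 : m + 5 - 1 = m + 4 := by omega
  have g4 : m + 4 - 1 = m + 3 := by omega
  rw [g1, g2, g3, g4]
  push_cast
  linarith [hS]

/-- The main statement, in clean indices. -/
def G (m : ℕ) : Prop :=
  ((m + 3 : ℕ) : ℝ) * Eu 0 (m + 2)
      - ((lucasSeq (m + 3) : ℝ) - 4 * (lucasSeq (m + 2) : ℝ))
    = ∑ k ∈ Finset.Icc 3 (m + 3), Aa Eu k * (lucasSeq (m + 3 - k + 1) : ℝ)

lemma base0 (h0 : Eu 0 0 = 1) (h1 : Eu 0 1 = -(1/2)) : G Eu 0 := by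
  show ((3 : ℕ) : ℝ) * Eu 0 2 - ((lucasSeq 3 : ℝ) - 4 * (lucasSeq 2 : ℝ))
    = ∑ k ∈ Finset.Icc 3 3, Aa Eu k * (lucasSeq (3 - k + 1) : ℝ)
  rw [Finset.Icc_self, Finset.sum_singleton]
  unfold Aa
  norm_num [lucas1, lucas2, lucas3, Finset.Icc_self, Finset.sum_singleton, h0, h1]
  ring

lemma base1 (h0 : Eu 0 0 = 1) (h1 : Eu 0 1 = -(1/2)) : G Eu 1 := by
  show ((4 : ℕ) : ℝ) * Eu 0 3 - ((lucasSeq 4 : ℝ) - 4 * (lucasSeq 3 : ℝ))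
    = ∑ k ∈ Finset.Icc 3 4, Aa Eu k * (lucasSeq (4 - k + 1) : ℝ)
  rw [show (4:ℕ) = 3 + 1 from rfl, Finset.sum_Icc_succ_top (by omega : 3 ≤ 3 + 1),
    Finset.Icc_self, Finset.sum_singleton]
  unfold Aa
  norm_num [lucas1, lucas2, lucas3, lucas4, h0, h1]
  rw [show Finset.Icc 1 2 = {1, 2} from rfl, Finset.sum_pair (by norm_num : (1:ℕ) ≠ 2)]
  norm_num [h0, h1]
  ring

lemma step (m : ℕ) (g1 : G Eu m) (g2 : G Eu (m + 1)) : G Eu (m + 2) := by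
  unfold G at g1 g2 ⊢
  rw [show m + 1 + 3 = m + 4 from rfl, show m + 1 + 2 = m + 3 from rfl] at g2
  rw [show m + 2 + 3 = m + 4 + 1 from rfl, show m + 2 + 2 = m + 4 from rfl]
  rw [Finset.sum_Icc_succ_top (by omega : 3 ≤ m + 4 + 1)]
  have hpeel : m + 4 + 1 - (m + 4 + 1) + 1 = 1 := by omega
  rw [hpeel]
  have hsum1 : ∑ k ∈ Finset.Icc 3 (m + 4), Aa Eu k * (lucasSeq (m + 4 + 1 - k + 1) : ℝ)
      = ∑ k ∈ Finset.Icc 3 (m + 4), Aa Eu k * (lucasSeq (m + 4 - k + 1) : ℝ)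
        + ∑ k ∈ Finset.Icc 3 (m + 4), Aa Eu k * (lucasSeq (m + 4 - k) : ℝ) := by
    rw [← Finset.sum_add_distrib]
    refine Finset.sum_congr rfl fun k hk => ?_
    rw [Finset.mem_Icc] at hk
    obtain ⟨j, hj⟩ : ∃ j, k + j = m + 4 := ⟨m + 4 - k, by omega⟩
    have e1 : m + 4 + 1 - k + 1 = j + 2 := by omega
    have e2 : m + 4 - k + 1 = j + 1 := by omega
    have e3 : m + 4 - k = j := by omega
    rw [e1, e2, e3, lucas_add_two]
    push_cast
    ring
  have hsum2 : ∑ k ∈ Finset.Icc 3 (m + 4), Aa Eu k * (lucasSeq (m + 4 - k) : ℝ)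
      = ∑ k ∈ Finset.Icc 3 (m + 3), Aa Eu k * (lucasSeq (m + 3 - k + 1) : ℝ)
        + Aa Eu (m + 4) * 2 := by
    rw [show m + 4 = m + 3 + 1 from rfl,
      Finset.sum_Icc_succ_top (by omega : 3 ≤ m + 3 + 1)]
    congr 1
    · refine Finset.sum_congr rfl fun k hk => ?_
      rw [Finset.mem_Icc] at hk
      have e : m + 3 + 1 - k = m + 3 - k + 1 := by omega
      rw [e]
    · have e : m + 3 + 1 - (m + 3 + 1) = 0 := by omega
      rw [e, lucas0]
      norm_num
  rw [hsum1, hsum2, ← g1, ← g2]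
  have hk := key Eu m
  rw [show m + 4 + 1 = m + 5 from rfl] at *
  have l1 : lucasSeq (m + 5) = lucasSeq (m + 4) + lucasSeq (m + 3) := rfl
  have l2 : lucasSeq (m + 4) = lucasSeq (m + 3) + lucasSeq (m + 2) := rfl
  rw [l1, l2, lucas1]
  push_cast
  linarith [hk]

lemma main (h0 : Eu 0 0 = 1) (h1 : Eu 0 1 = -(1/2)) : ∀ m : ℕ, G Eu m := by
  have H : ∀ m : ℕ, G Eu m ∧ G Eu (m + 1) := by
    intro m
    induction m with
    | zero => exact ⟨base0 Eu h0 h1, base1 Eu h0 h1⟩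
    | succ k ih => exact ⟨ih.2, step Eu k ih.1 ih.2⟩
  exact fun m => (H m).1

end EulerLucasAux

open EulerLucasAux in
theorem euler_number_lucas_identity' (Eu : ℝ → ℕ → ℝ) (hEu : IsEulerFamily Eu)
    (n : ℕ) (hn : 3 ≤ n) :
    (n : ℝ) * Eu 0 (n - 1) - ((lucasSeq n : ℝ) - 4 * (lucasSeq (n - 1) : ℝ))
      = ∑ k ∈ Finset.Icc 3 n,
          ((k : ℝ) * Eu 0 (k - 1) - 3 * ((k : ℝ) - 1) * Eu 0 (k - 2)) *
            (lucasSeq (n - k + 1) : ℝ)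
        + 5 * ∑ k ∈ Finset.Icc 3 n, ∑ s ∈ Finset.Icc 1 (k - 2),
            (-1 : ℝ) ^ (k - s) * 2 ^ (k - s - 2) * (s : ℝ) * Eu 0 (s - 1) *
              (lucasSeq (n - k + 1) : ℝ) := by
  have hsplit : ∑ k ∈ Finset.Icc 3 n,
          ((k : ℝ) * Eu 0 (k - 1) - 3 * ((k : ℝ) - 1) * Eu 0 (k - 2)) *
            (lucasSeq (n - k + 1) : ℝ)
        + 5 * ∑ k ∈ Finset.Icc 3 n, ∑ s ∈ Finset.Icc 1 (k - 2),
            (-1 : ℝ) ^ (k - s) * 2 ^ (k - s - 2) * (s : ℝ) * Eu 0 (s - 1) *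
              (lucasSeq (n - k + 1) : ℝ)
      = ∑ k ∈ Finset.Icc 3 n, Aa Eu k * (lucasSeq (n - k + 1) : ℝ) := by
    rw [Finset.mul_sum, ← Finset.sum_add_distrib]
    refine Finset.sum_congr rfl fun k _ => ?_
    unfold Aa
    rw [add_mul, mul_assoc (5:ℝ), Finset.sum_mul]
  rw [hsplit]
  obtain ⟨m, rfl⟩ : ∃ m, n = m + 3 := ⟨n - 3, by omega⟩
  exact main Eu (eu_zero Eu hEu) (eu_one Eu hEu) m

end
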